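/- For every integer n ≥ 0, the total weight of the set T*_n of weighted bicolored Motzkin paths equals Q_n(t,q): ρ(T*_n) = Q_n(t,q) in ℤ[t,q]. -/

import Mathlib

open Finset Polynomial

/-- A step of a bicolored Motzkin path: up, down, straight level, wavy level. -/
inductive MStep where
  | U : MStep
  | D : MStep
  | L : MStep
  | W : MStep
deriving DecidableEq

/-- A weighted bicolored Motzkin path of length `n`: a sequence of steps together
with, for each step, the pair `(b, c)` of exponents of its monomial weight
`t^b q^c`. -/
structure WPath (n : ℕ) where
  step : Fin n → MStep
  wt : Fin n → ℕ × ℕ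

/-- The height increment of a step. -/
def dh : MStep → ℤ
  | MStep.U => 1
  | MStep.D => -1
  | MStep.L => 0
  | MStep.W => 0

/-- The height (of the starting point) of the `j`-th step; `ht μ n` is the final
height. -/
def ht {n : ℕ} (μ : WPath n) (j : ℕ) : ℤ :=
  ∑ k ∈ Finset.range j, if h : k < n then dh (μ.step ⟨k, h⟩) else 0

/-- The underlying path is a Motzkin path: stays weakly above the `x`-axis and
ends on it. -/
def IsMotzkin {n : ℕ} (μ : WPath n) : Prop :=
  (∀ j ≤ n, 0 ≤ ht μ j) ∧ ht μ n = 0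

/-- The weight `ρ(μ)`: the product of the step weights `t^b q^c`, as an element
of `ℤ[t,q]` (realized as `ℤ[q][t]`, `t` the outer variable). -/
noncomputable def rho {n : ℕ} (μ : WPath n) : Polynomial (Polynomial ℤ) :=
  ∏ j : Fin n, Polynomial.C (Polynomial.X ^ (μ.wt j).2) * Polynomial.X ^ (μ.wt j).1

/-- `[m]_q = 1 + q + ⋯ + q^(m-1)` in `ℤ[q]`. -/
noncomputable def qnat (m : ℕ) : Polynomial ℤ := ∑ i ∈ Finset.range m, Polynomial.X ^ i

/-- The `q`-derivative `D` on `ℤ[q][t]` (outer variable `t`, inner variable `q`),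
the `ℤ[q]`-linear operator with `D(t^m) = [m]_q t^(m-1)`. -/
noncomputable def opD (f : Polynomial (Polynomial ℤ)) : Polynomial (Polynomial ℤ) :=
  f.sum fun m c => Polynomial.C (c * qnat m) * Polynomial.X ^ (m - 1)

/-- The operator `U`: multiplication by `t` on `ℤ[q][t]`. -/
noncomputable def opU (f : Polynomial (Polynomial ℤ)) : Polynomial (Polynomial ℤ) :=
  Polynomial.X * f

/-- `R_n(t,q) = (D + DUU)^n 1`. -/
noncomputable def Rpoly (n : ℕ) : Polynomial (Polynomial ℤ) :=
  (fun f => opD f + opD (opU (opU f)))^[n] 1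

/-- `Q_n(t,q) = (D + UDU)^n 1`. -/
noncomputable def Qpoly (n : ℕ) : Polynomial (Polynomial ℤ) :=
  (fun f => opD f + opU (opD (opU f)))^[n] 1

/-- `μ ∈ T*_n`: a weighted bicolored Motzkin path with no wavy level step on the
`x`-axis, whose weights satisfy, at each step of height `h`: up steps carry `q^c`
with `c ≤ h` or `t²q^c` with `2h+1 ≤ c ≤ 3h+1`; straight level steps carry `tq^c`
with `h ≤ c ≤ 2h`; wavy level steps (at height `h ≥ 1`) carry `tq^c` with
`h ≤ c ≤ 2h-1`; down steps at height `h+1` carry `q^c` with `c ≤ h`. -/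
def Tscond {n : ℕ} (μ : WPath n) : Prop :=
  IsMotzkin μ ∧ ∀ j : Fin n,
    (μ.step j = MStep.U →
      ((μ.wt j).1 = 0 ∧ ((μ.wt j).2 : ℤ) ≤ ht μ j) ∨
      ((μ.wt j).1 = 2 ∧ 2 * ht μ j + 1 ≤ ((μ.wt j).2 : ℤ) ∧
        ((μ.wt j).2 : ℤ) ≤ 3 * ht μ j + 1)) ∧
    (μ.step j = MStep.L →
      (μ.wt j).1 = 1 ∧ ht μ j ≤ ((μ.wt j).2 : ℤ) ∧ ((μ.wt j).2 : ℤ) ≤ 2 * ht μ j) ∧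
    (μ.step j = MStep.W →
      1 ≤ ht μ j ∧ (μ.wt j).1 = 1 ∧ ht μ j ≤ ((μ.wt j).2 : ℤ) ∧
        ((μ.wt j).2 : ℤ) ≤ 2 * ht μ j - 1) ∧
    (μ.step j = MStep.D →
      (μ.wt j).1 = 0 ∧ ((μ.wt j).2 : ℤ) ≤ ht μ j - 1)

abbrev S := Polynomial (Polynomial ℤ)

section Aux

lemma qnat_zero : qnat 0 = 0 := by simp [qnat]
lemma qnat_one : qnat 1 = 1 := by simp [qnat]
lemma qnat_add (a b : ℕ) : qnat (a + b) = qnat a + X ^ a * qnat b := by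
  simp [qnat, Finset.sum_range_add, Finset.mul_sum, pow_add]
lemma qnat_succ (m : ℕ) : qnat (m + 1) = qnat m + X ^ m := by
  simp [qnat_add, qnat_one]
lemma qnat_succ' (m : ℕ) : qnat (m + 1) = 1 + X * qnat m := by
  have := qnat_add 1 m; simpa [qnat_one, add_comm] using this

/-- `P m h = [m][m-1]⋯[m-h+1]` -/
noncomputable def P : ℕ → ℕ → Polynomial ℤ
  | _, 0 => 1
  | m, h+1 => qnat m * P (m-1) h

lemma P_zero_right (m : ℕ) : P m 0 = 1 := rfl
lemma P_succ (m h : ℕ) : P m (h+1) = qnat m * P (m-1) h := rfl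

lemma P_eq_zero : ∀ h m, m < h → P m h = 0 := by
  intro h
  induction h with
  | zero => omega
  | succ g ih =>
    intro m hm
    rcases Nat.eq_zero_or_pos m with rfl | hp
    · simp [P_succ, qnat_zero]
    · rw [P_succ, ih (m-1) (by omega), mul_zero]

lemma P_fact : ∀ h m, P m (h+1) = P m h * qnat (m - h) := by
  intro h
  induction h with
  | zero => intro m; simp [P_succ, P_zero_right, mul_comm]
  | succ g ih =>
    intro m
    rw [P_succ, ih (m-1), ← mul_assoc, ← P_succ]
    congr 2
    omega

/-- the scalar core identity -/
lemma SCr (h k : ℕ) :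
    qnat (h + k + 1) ^ 2 =
      X ^ (2*h+1) * qnat (k+1) * qnat k
      + X ^ h * (qnat (h+1) + qnat h) * qnat (k+1)
      + qnat h ^ 2 := by
  have e1 : qnat (h + k + 1) = qnat h + X ^ h * qnat (k+1) := by
    rw [add_assoc, qnat_add]
  have e2 : qnat (k+1) = 1 + X * qnat k := qnat_succ' k
  have e3 : qnat (h+1) = qnat h + X ^ h := qnat_succ h
  rw [e1, e3, e2]
  ring

/-- main scalar identity -/
lemma SC (m h : ℕ) :
    qnat (m+1) * P (m+1) h =
      X ^ (2*h+1) * P m (h+1)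
      + X ^ h * (qnat (h+1) + qnat h) * P m h
      + qnat h ^ 2 * P m (h-1) := by
  rcases le_or_gt h m with hle | hgt
  · -- h ≤ m, write m = h + k
    obtain ⟨k, rfl⟩ : ∃ k, m = h + k := ⟨m - h, by omega⟩
    rcases Nat.eq_zero_or_pos h with rfl | hp
    · -- h = 0
      rw [P_fact 0]
      simp only [Nat.zero_add, Nat.sub_zero, P_zero_right, mul_one, one_mul, qnat_zero,
        pow_zero, add_zero, zero_pow, qnat_one, Nat.zero_sub]
      rw [qnat_succ' k]
      ring
    · obtain ⟨g, rfl⟩ : ∃ g, h = g + 1 := ⟨h - 1, by omega⟩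
      -- express everything via G = P (g+1+k) g
      have hP1 : P (g+1+k+1) (g+1) = qnat (g+1+k+1) * P (g+1+k) g := P_succ _ _
      have hP2 : P (g+1+k) (g+1) = P (g+1+k) g * qnat (k+1) := by
        rw [P_fact]; congr 2; omega
      have hP3 : P (g+1+k) (g+1+1) = P (g+1+k) g * qnat (k+1) * qnat k := by
        rw [P_fact, hP2]; congr 2; omega
      have hsub : g + 1 - 1 = g := rfl
      rw [hP1, hP2, hP3, hsub]
      have := SCr (g+1) k
      calc qnat (g+1+k+1) * (qnat (g+1+k+1) * P (g+1+k) g)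
          = qnat ((g+1) + k + 1) ^ 2 * P (g+1+k) g := by ring_nf
        _ = (X ^ (2*(g+1)+1) * qnat (k+1) * qnat k
              + X ^ (g+1) * (qnat (g+1+1) + qnat (g+1)) * qnat (k+1)
              + qnat (g+1) ^ 2) * P (g+1+k) g := by rw [← this]
        _ = _ := by ring
  · -- h > m
    rcases Nat.lt_or_ge (m+1) h with hgt2 | heq
    · -- h ≥ m + 2 : everything vanishes
      rw [P_eq_zero h (m+1) hgt2, P_eq_zero (h+1) m (by omega),
        P_eq_zero h m (by omega), P_eq_zero (h-1) m (by omega)]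
      ring
    · -- h = m+1
      have : h = m + 1 := by omega
      subst this
      rw [P_eq_zero (m+1+1) m (by omega), P_eq_zero (m+1) m (by omega)]
      have : m + 1 - 1 = m := rfl
      rw [this, P_succ]
      have : m + 1 - 1 = m := rfl
      rw [this]
      ring

lemma opD_monomial (m : ℕ) (c : Polynomial ℤ) :
    opD (monomial m c) = monomial (m-1) (c * qnat m) := by
  rw [opD, Polynomial.sum_monomial_index, C_mul_X_pow_eq_monomial]
  simp

lemma opD_add (f g : S) : opD (f + g) = opD f + opD g := by
  rw [opD, opD, opD, Polynomial.sum_add_index]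
  · intro m; simp
  · intro m a b; rw [add_mul, map_add, add_mul]

noncomputable def Dh (h : ℕ) (f : S) : S := opD^[h] f

lemma Dh_add (h : ℕ) (f g : S) : Dh h (f + g) = Dh h f + Dh h g := by
  induction h generalizing f g with
  | zero => rfl
  | succ g ih => simp only [Dh, Function.iterate_succ_apply] at *; rw [opD_add, ih]

lemma Dh_monomial (h m : ℕ) (c : Polynomial ℤ) :
    Dh h (monomial m c) = monomial (m - h) (c * P m h) := by
  induction h generalizing m c with
  | zero => simp [Dh, P_zero_right]
  | succ g ih =>
    rw [Dh, Function.iterate_succ_apply, ← Dh, opD_monomial, ih,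
      show m - 1 - g = m - (g+1) from by omega, P_succ, ← mul_assoc]

noncomputable def Mop (f : S) : S := opD f + opU (opD (opU f))

lemma Mop_monomial (m : ℕ) (c : Polynomial ℤ) :
    Mop (monomial m c) = monomial (m-1) (c * qnat m) + monomial (m+1) (c * qnat (m+1)) := by
  simp only [Mop, opU, X_mul_monomial, opD_monomial, Nat.add_sub_cancel]

lemma key (h : ℕ) (f : S) :
    Dh h (Mop f) = (1 + C (X ^ (2*h+1)) * X^2) * Dh (h+1) f
      + C (X ^ h * (qnat (h+1) + qnat h)) * X * Dh h f
      + C (qnat h ^ 2) * Dh (h-1) f := by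
  induction f using Polynomial.induction_on' with
  | add p q hp hq =>
    have madd : Mop (p + q) = Mop p + Mop q := by
      simp only [Mop, opU, mul_add, opD_add]; ring
    rw [madd, Dh_add, hp, hq, Dh_add, Dh_add, Dh_add]
    ring
  | monomial m c =>
    rw [Mop_monomial, Dh_add, Dh_monomial, Dh_monomial, Dh_monomial, Dh_monomial, Dh_monomial]
    -- normalize first LHS summand
    have e0 : m - 1 - h = m - (h+1) := by omega
    have c0 : c * qnat m * P (m-1) h = c * P m (h+1) := by rw [P_succ]; ring
    rw [e0, c0]
    -- expand RHS products
    rw [add_mul, one_mul, mul_assoc (C (X ^ (2*h+1))), X_pow_mul_monomial (k := 2),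
      C_mul_monomial, mul_assoc (C (X ^ h * (qnat (h+1) + qnat h))), X_mul_monomial,
      C_mul_monomial, C_mul_monomial]
    -- now a pure monomial identity
    rcases Nat.lt_or_ge h m with hlt | hge
    · -- h < m
      have e1 : m - (h+1) + 2 = m + 1 - h := by omega
      rw [e1]
      rcases Nat.eq_zero_or_pos h with rfl | hp
      · -- h = 0
        have sc := SC m 0
        rw [qnat_zero] at sc
        simp only [zero_pow, ne_eq, OfNat.ofNat_ne_zero, not_false_eq_true, zero_mul,
          add_zero] at sc
        simp only [qnat_zero, zero_pow, ne_eq, OfNat.ofNat_ne_zero, not_false_eq_true,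
          zero_mul, mul_zero, monomial_zero_right, add_zero]
        rw [show m - 0 + 1 = m + 1 - 0 from by omega, add_assoc]
        congr 1
        rw [← map_add]
        congr 1
        linear_combination c * sc
      · have e2 : m - h + 1 = m + 1 - h := by omega
        have e3 : m - (h-1) = m + 1 - h := by omega
        rw [e2, e3, add_assoc, add_assoc]
        congr 1
        rw [← map_add, ← map_add]
        congr 1
        linear_combination c * SC m h
    · rcases Nat.eq_or_lt_of_le hge with rfl | hgt
      · -- h = m
        have z1 : P m (m+1) = 0 := P_eq_zero _ _ (by omega)
        have sc := SC m m
        rw [z1] at sc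
        rw [z1]
        simp only [mul_zero, monomial_zero_right, zero_add]
        rcases Nat.eq_zero_or_pos m with rfl | hp
        · have sc0 := sc
          simp only [qnat_zero, zero_pow, ne_eq, OfNat.ofNat_ne_zero, not_false_eq_true,
            zero_mul, mul_zero, add_zero] at sc0
          simp only [qnat_zero, zero_pow, ne_eq, OfNat.ofNat_ne_zero, not_false_eq_true,
            zero_mul, mul_zero, monomial_zero_right, add_zero]
          congr 1
          linear_combination c * sc0
        · have e2 : m - m + 1 = m + 1 - m := by omega
          have e3 : m - (m-1) = m + 1 - m := by omega
          rw [e2, e3, ← map_add]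
          congr 1
          linear_combination c * sc
      · rcases Nat.eq_or_lt_of_le hgt with heq | hgt2
        · -- h = m + 1
          have rfl' : h = m + 1 := heq.symm
          subst rfl'
          have z1 : P m (m+1+1) = 0 := P_eq_zero _ _ (by omega)
          have z2 : P m (m+1) = 0 := P_eq_zero _ _ (by omega)
          have sc := SC m (m+1)
          rw [z1, z2] at sc
          rw [z1, z2]
          simp only [mul_zero, monomial_zero_right, zero_add, mul_zero, zero_mul] at *
          have e0 : m + 1 - (m + 1) = m - (m + 1 - 1) := by omega
          rw [e0]
          congr 1
          linear_combination c * sc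
        · -- h ≥ m + 2
          have z0 : P (m+1) h = 0 := P_eq_zero _ _ (by omega)
          have z1 : P m (h+1) = 0 := P_eq_zero _ _ (by omega)
          have z2 : P m h = 0 := P_eq_zero _ _ (by omega)
          have z3 : P m (h-1) = 0 := P_eq_zero _ _ (by omega)
          rw [z0, z1, z2, z3]
          simp

instance : Fintype MStep :=
  ⟨{MStep.U, MStep.D, MStep.L, MStep.W}, by intro s; cases s <;> simp⟩

instance {n : ℕ} : DecidableEq (WPath n) := fun a b =>
  decidable_of_iff (a.step = b.step ∧ a.wt = b.wt)
    ⟨fun ⟨h1, h2⟩ => by cases a; cases b; simp_all,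
     fun h => by cases h; exact ⟨rfl, rfl⟩⟩

/-- weight monomial of a step with exponent data `(b, c)`. -/
noncomputable def wmon (w : ℕ × ℕ) : S := C (X ^ w.2) * X ^ w.1

/-- admissible weight exponents for a step of given type at given height -/
def wset : MStep → ℕ → Finset (ℕ × ℕ)
  | MStep.U, h => ((range (h+1)).image fun c => (0, c)) ∪
      ((range (h+1)).image fun c => (2, 2*h+1+c))
  | MStep.L, h => (range (h+1)).image fun c => (1, h+c)
  | MStep.W, h => (range h).image fun c => (1, h+c)
  | MStep.D, h => (range h).image fun c => (0, c)

/-- next height -/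
def nh : MStep → ℕ → ℕ
  | MStep.U, h => h+1
  | MStep.D, h => h-1
  | _, h => h

/-- total weight of paths of length `n` starting at height `H` ending at 0 -/
noncomputable def Fv : ℕ → ℕ → S
  | 0, H => if H = 0 then 1 else 0
  | n+1, H => ∑ s : MStep, (∑ w ∈ wset s H, wmon w) * Fv n (nh s H)

lemma wsum_U (h : ℕ) :
    ∑ w ∈ wset MStep.U h, wmon w
      = C (qnat (h+1)) + C (X ^ (2*h+1) * qnat (h+1)) * X^2 := by
  rw [wset, Finset.sum_union]
  · rw [Finset.sum_image (by intro a _ b _ hab; simpa using hab),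
      Finset.sum_image (by intro a _ b _ hab; simpa using hab)]
    simp only [wmon, pow_zero, mul_one]
    rw [← Finset.sum_mul, ← map_sum, ← map_sum, qnat]
    have : (∑ x ∈ range (h+1), (X : Polynomial ℤ) ^ (2*h+1+x))
        = X ^ (2*h+1) * ∑ i ∈ range (h+1), X ^ i := by
      rw [Finset.mul_sum]
      exact Finset.sum_congr rfl fun i _ => pow_add X (2*h+1) i
    rw [this]
  · rw [Finset.disjoint_left]
    intro a ha hb
    simp only [mem_image, mem_range] at ha hb
    obtain ⟨c, _, rfl⟩ := ha
    obtain ⟨d, _, h2⟩ := hb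
    exact absurd (congrArg Prod.fst h2) (by simp)

lemma wsum_L (h : ℕ) :
    ∑ w ∈ wset MStep.L h, wmon w = C (X ^ h * qnat (h+1)) * X := by
  rw [wset, Finset.sum_image (by intro a _ b _ hab; simpa using hab)]
  simp only [wmon, pow_one]
  rw [← Finset.sum_mul, ← map_sum, qnat]
  have : (∑ x ∈ range (h+1), (X : Polynomial ℤ) ^ (h+x))
      = X ^ h * ∑ i ∈ range (h+1), X ^ i := by
    rw [Finset.mul_sum]
    exact Finset.sum_congr rfl fun i _ => pow_add X h i
  rw [this]

lemma wsum_W (h : ℕ) :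
    ∑ w ∈ wset MStep.W h, wmon w = C (X ^ h * qnat h) * X := by
  rw [wset, Finset.sum_image (by intro a _ b _ hab; simpa using hab)]
  simp only [wmon, pow_one]
  rw [← Finset.sum_mul, ← map_sum, qnat]
  have : (∑ x ∈ range h, (X : Polynomial ℤ) ^ (h+x))
      = X ^ h * ∑ i ∈ range h, X ^ i := by
    rw [Finset.mul_sum]
    exact Finset.sum_congr rfl fun i _ => pow_add X h i
  rw [this]

lemma wsum_D (h : ℕ) :
    ∑ w ∈ wset MStep.D h, wmon w = C (qnat h) := by
  rw [wset, Finset.sum_image (by intro a _ b _ hab; simpa using hab)]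
  simp only [wmon, pow_zero, mul_one]
  rw [← map_sum, qnat]

noncomputable def qfact : ℕ → Polynomial ℤ
  | 0 => 1
  | h+1 => qfact h * qnat (h+1)

lemma sum_MStep {M : Type*} [AddCommMonoid M] (f : MStep → M) :
    ∑ s : MStep, f s = f MStep.U + f MStep.D + f MStep.L + f MStep.W := by
  have : (univ : Finset MStep) = {MStep.U, MStep.D, MStep.L, MStep.W} := by
    ext s; cases s <;> simp
  rw [this, Finset.sum_insert (by decide), Finset.sum_insert (by decide),
    Finset.sum_insert (by decide), Finset.sum_singleton]
  simp only [← add_assoc]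

lemma Fv_succ (n H : ℕ) :
    Fv (n+1) H = (C (qnat (H+1)) + C (X ^ (2*H+1) * qnat (H+1)) * X^2) * Fv n (H+1)
      + C (X ^ H * (qnat (H+1) + qnat H)) * X * Fv n H
      + C (qnat H) * Fv n (H-1) := by
  rw [Fv, sum_MStep]
  rw [wsum_U, wsum_L, wsum_W, wsum_D]
  simp only [nh]
  rw [show (X : Polynomial ℤ) ^ H * (qnat (H+1) + qnat H)
      = X ^ H * qnat (H+1) + X ^ H * qnat H from by ring, map_add]
  ring

lemma Qpoly_succ (n : ℕ) : Qpoly (n+1) = Mop (Qpoly n) := by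
  rw [Qpoly, Function.iterate_succ_apply', Qpoly, Mop]

lemma invariant (n h : ℕ) : C (qfact h) * Fv n h = Dh h (Qpoly n) := by
  induction n generalizing h with
  | zero =>
    rw [Qpoly]
    show C (qfact h) * Fv 0 h = Dh h 1
    have h1 : (1 : S) = monomial 0 1 := by simp
    rcases Nat.eq_zero_or_pos h with rfl | hp
    · simp [Fv, Dh, qfact]
    · rw [Fv]
      simp only [if_neg (by omega : ¬ h = 0), mul_zero]
      obtain ⟨g, rfl⟩ : ∃ g, h = g + 1 := ⟨h - 1, by omega⟩
      have hD1 : opD (1 : S) = 0 := by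
        rw [h1, opD, Polynomial.sum_monomial_index] <;> simp [qnat_zero]
      have hDz : ∀ k, Dh k (0 : S) = 0 := by
        intro k
        induction k with
        | zero => rfl
        | succ k2 ihk =>
          rw [show Dh (k2+1) (0:S) = Dh k2 (opD 0) from Function.iterate_succ_apply _ _ _]
          rw [show opD (0:S) = 0 from by simp [opD], ihk]
      rw [show Dh (g+1) (1:S) = Dh g (opD 1) from Function.iterate_succ_apply _ _ _,
        hD1, hDz]
  | succ n ih =>
    rw [Qpoly_succ, key, Fv_succ]
    rw [mul_add, mul_add]
    refine congrArg₂ (· + ·) ?_ ?_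
    · refine congrArg₂ (· + ·) ?_ ?_
      · -- up term
        rw [← ih (h+1)]
        have : qfact h * qnat (h+1) = qfact (h+1) := rfl
        rw [show (C (qnat (h+1)) + C (X ^ (2*h+1) * qnat (h+1)) * X^2)
            = (1 + C (X ^ (2*h+1)) * X^2) * C (qnat (h+1)) from by
            rw [map_mul]; ring]
        rw [show qfact (h+1) = qfact h * qnat (h+1) from rfl, map_mul]
        ring
      · -- level term
        rw [← ih h]; ring
    · -- down term
      rcases Nat.eq_zero_or_pos h with rfl | hp
      · simp [qnat_zero]
      · obtain ⟨g, rfl⟩ : ∃ g, h = g + 1 := ⟨h - 1, by omega⟩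
        rw [show g + 1 - 1 = g from rfl, ← ih g,
          show qfact (g+1) = qfact g * qnat (g+1) from rfl, map_mul, pow_two, map_mul]
        ring

theorem FvQ (n : ℕ) : Fv n 0 = Qpoly n := by
  have := invariant n 0
  rw [show qfact 0 = 1 from rfl, map_one, one_mul] at this
  rw [this, Dh]
  rfl

section PartA

/-- prepend a step to a path -/
def consP {n : ℕ} (s : MStep) (w : ℕ × ℕ) (μ : WPath n) : WPath (n+1) :=
  ⟨Fin.cons s μ.step, Fin.cons w μ.wt⟩

/-- the tail of a path -/
def tailP {n : ℕ} (μ : WPath (n+1)) : WPath n :=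
  ⟨fun i => μ.step i.succ, fun i => μ.wt i.succ⟩

lemma consP_tailP {n : ℕ} (μ : WPath (n+1)) :
    consP (μ.step 0) (μ.wt 0) (tailP μ) = μ := by
  cases μ
  unfold consP tailP
  congr 1 <;> exact Fin.cons_self_tail _

lemma step_consP_zero {n : ℕ} (s : MStep) (w : ℕ × ℕ) (ν : WPath n) :
    (consP s w ν).step 0 = s := by simp [consP]

lemma wt_consP_zero {n : ℕ} (s : MStep) (w : ℕ × ℕ) (ν : WPath n) :
    (consP s w ν).wt 0 = w := by simp [consP]

lemma step_consP_succ {n : ℕ} (s : MStep) (w : ℕ × ℕ) (ν : WPath n) (i : Fin n) :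
    (consP s w ν).step i.succ = ν.step i := by simp [consP]

lemma wt_consP_succ {n : ℕ} (s : MStep) (w : ℕ × ℕ) (ν : WPath n) (i : Fin n) :
    (consP s w ν).wt i.succ = ν.wt i := by simp [consP]

lemma ht_zero {n : ℕ} (μ : WPath n) : ht μ 0 = 0 := by simp [ht]

lemma ht_consP {n : ℕ} (s : MStep) (w : ℕ × ℕ) (ν : WPath n) (j : ℕ) :
    ht (consP s w ν) (j+1) = dh s + ht ν j := by
  have h0 : (if h : 0 < n+1 then dh ((consP s w ν).step ⟨0, h⟩) else 0) = dh s := by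
    simp [consP]
  have hsucc : ∀ i, (if h : i+1 < n+1 then dh ((consP s w ν).step ⟨i+1, h⟩) else 0)
      = (if h : i < n then dh (ν.step ⟨i, h⟩) else 0) := by
    intro i
    by_cases hi : i < n
    · rw [dif_pos (by omega), dif_pos hi]
      have e : (⟨i+1, by omega⟩ : Fin (n+1)) = Fin.succ ⟨i, hi⟩ := rfl
      rw [e, step_consP_succ]
    · rw [dif_neg (by omega), dif_neg hi]
  rw [ht, Finset.sum_range_succ', h0,
    Finset.sum_congr rfl fun i _ => hsucc i, ← ht, add_comm]

/-- the arithmetic condition on the weight of a step at (integer) height `h` -/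
def Scond : MStep → ℤ → ℕ × ℕ → Prop
  | MStep.U, h, w => (w.1 = 0 ∧ (w.2 : ℤ) ≤ h) ∨
      (w.1 = 2 ∧ 2*h+1 ≤ (w.2 : ℤ) ∧ (w.2 : ℤ) ≤ 3*h+1)
  | MStep.L, h, w => w.1 = 1 ∧ h ≤ (w.2 : ℤ) ∧ (w.2 : ℤ) ≤ 2*h
  | MStep.W, h, w => 1 ≤ h ∧ w.1 = 1 ∧ h ≤ (w.2 : ℤ) ∧ (w.2 : ℤ) ≤ 2*h - 1
  | MStep.D, h, w => w.1 = 0 ∧ (w.2 : ℤ) ≤ h - 1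

lemma mem_wset (s : MStep) (H : ℕ) (w : ℕ × ℕ) :
    w ∈ wset s H ↔ Scond s (H : ℤ) w := by
  obtain ⟨b, c⟩ := w
  cases s <;>
    simp only [wset, Scond, Finset.mem_union, Finset.mem_image, Finset.mem_range,
      Prod.mk.injEq] <;>
    constructor <;> intro h
  · rcases h with ⟨a, ha, rfl, rfl⟩ | ⟨a, ha, rfl, rfl⟩
    · exact Or.inl ⟨rfl, by omega⟩
    · exact Or.inr ⟨rfl, by omega, by omega⟩
  · rcases h with ⟨rfl, hc⟩ | ⟨rfl, h1, h2⟩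
    · exact Or.inl ⟨c, by omega, rfl, rfl⟩
    · exact Or.inr ⟨c - (2*H+1), by omega, rfl, by omega⟩
  · obtain ⟨a, ha, rfl, rfl⟩ := h
    exact ⟨rfl, by omega⟩
  · obtain ⟨rfl, hc⟩ := h
    exact ⟨c, by omega, rfl, rfl⟩
  · obtain ⟨a, ha, rfl, rfl⟩ := h
    exact ⟨rfl, by omega, by omega⟩
  · obtain ⟨rfl, h1, h2⟩ := h
    exact ⟨c - H, by omega, rfl, by omega⟩
  · obtain ⟨a, ha, rfl, rfl⟩ := h
    exact ⟨by omega, rfl, by omega, by omega⟩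
  · obtain ⟨hH, rfl, h1, h2⟩ := h
    exact ⟨c - H, by omega, rfl, by omega⟩

lemma nh_cast {s : MStep} {H : ℕ} {w : ℕ × ℕ} (hw : w ∈ wset s H) :
    (nh s H : ℤ) = (H : ℤ) + dh s := by
  cases s
  · simp only [nh, dh]; push_cast; ring
  · simp only [nh, dh]
    have h1 : 1 ≤ H := by
      obtain ⟨x, hx, -⟩ : ∃ x, x < H ∧ (0, x) = w := by
        simpa [wset] using hw
      omega
    omega
  · simp [nh, dh]
  · simp [nh, dh]

/-- the generalized condition: path of length `n` starting at height `H`. -/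
def TgenP {n : ℕ} (H : ℕ) (μ : WPath n) : Prop :=
  (∀ j ≤ n, 0 ≤ (H : ℤ) + ht μ j) ∧ ((H : ℤ) + ht μ n = 0) ∧
    ∀ j : Fin n, Scond (μ.step j) ((H : ℤ) + ht μ (j : ℕ)) (μ.wt j)

/-- the finite set `T*` of admissible weighted paths, starting at height `H`. -/
def TS : (n : ℕ) → (H : ℕ) → Finset (WPath n)
  | 0, 0 => {⟨Fin.elim0, Fin.elim0⟩}
  | 0, _+1 => ∅
  | n+1, H => Finset.univ.biUnion fun s : MStep =>
      ((wset s H) ×ˢ TS n (nh s H)).image fun p => consP s p.1 p.2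

lemma wpath_zero_eq (μ ν : WPath 0) : μ = ν := by
  cases μ; cases ν
  congr 1 <;> funext j <;> exact j.elim0

lemma mem_TS : ∀ {n : ℕ} (H : ℕ) (μ : WPath n), μ ∈ TS n H ↔ TgenP H μ := by
  intro n
  induction n with
  | zero =>
    intro H μ
    cases H with
    | zero =>
      simp only [TS, Finset.mem_singleton, TgenP]
      constructor
      · intro _
        refine ⟨?_, ?_, fun j => j.elim0⟩
        · intro j hj
          have : j = 0 := by omega
          subst this
          rw [ht_zero]; simp
        · rw [ht_zero]; simp
      · intro _; exact wpath_zero_eq _ _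
    | succ H =>
      simp only [TS, Finset.notMem_empty, false_iff, TgenP]
      intro ⟨_, h2, _⟩
      rw [ht_zero] at h2
      omega
  | succ n ih =>
    intro H μ
    constructor
    · intro hμ
      simp only [TS, Finset.mem_biUnion, Finset.mem_image, Finset.mem_univ, true_and,
        Finset.mem_product] at hμ
      obtain ⟨s, p, ⟨hw, hν⟩, rfl⟩ := hμ
      obtain ⟨g1, g2, g3⟩ := (ih (nh s H) p.2).1 hν
      have hnh : (nh s H : ℤ) = (H : ℤ) + dh s := nh_cast hw
      refine ⟨?_, ?_, ?_⟩
      · intro j hj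
        cases j with
        | zero => rw [ht_zero]; omega
        | succ k =>
          rw [ht_consP]
          have := g1 k (by omega)
          omega
      · rw [ht_consP]
        have := g2
        omega
      · intro j
        refine Fin.cases ?_ ?_ j
        · rw [show ((0 : Fin (n+1)) : ℕ) = 0 from rfl, ht_zero, add_zero,
            step_consP_zero, wt_consP_zero]
          exact (mem_wset s H p.1).1 hw
        · intro i
          rw [show ((i.succ : Fin (n+1)) : ℕ) = (i : ℕ) + 1 from rfl, ht_consP,
            step_consP_succ, wt_consP_succ,
            show (H : ℤ) + (dh s + ht p.2 i) = (nh s H : ℤ) + ht p.2 i from by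
              rw [hnh]; ring]
          exact g3 i
    · intro ⟨g1, g2, g3⟩
      simp only [TS, Finset.mem_biUnion, Finset.mem_image, Finset.mem_univ, true_and,
        Finset.mem_product]
      have hS : Scond (μ.step 0) (H : ℤ) (μ.wt 0) := by
        have := g3 0
        rwa [show ((0 : Fin (n+1)) : ℕ) = 0 from rfl, ht_zero, add_zero] at this
      have hw : μ.wt 0 ∈ wset (μ.step 0) H := (mem_wset _ _ _).2 hS
      have hnh : (nh (μ.step 0) H : ℤ) = (H : ℤ) + dh (μ.step 0) := nh_cast hw
      refine ⟨μ.step 0, (μ.wt 0, tailP μ), ⟨hw, ?_⟩, consP_tailP μ⟩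
      show tailP μ ∈ TS n (nh (μ.step 0) H)
      rw [ih]
      have hht : ∀ k, ht μ (k+1) = dh (μ.step 0) + ht (tailP μ) k := by
        intro k
        conv_lhs => rw [← consP_tailP μ]
        exact ht_consP _ _ _ k
      refine ⟨?_, ?_, ?_⟩
      · intro k hk
        have := g1 (k+1) (by omega)
        rw [hht k] at this
        omega
      · have := g2
        rw [hht n] at this
        omega
      · intro i
        have := g3 i.succ
        rw [show ((i.succ : Fin (n+1)) : ℕ) = (i : ℕ) + 1 from rfl, hht i] at this
        have h1 : μ.step i.succ = (tailP μ).step i := rfl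
        have h2 : μ.wt i.succ = (tailP μ).wt i := rfl
        rw [h1, h2] at this
        have he : (H : ℤ) + (dh (μ.step 0) + ht (tailP μ) i)
            = (nh (μ.step 0) H : ℤ) + ht (tailP μ) i := by rw [hnh]; ring
        rwa [he] at this

lemma rho_consP {n : ℕ} (s : MStep) (w : ℕ × ℕ) (ν : WPath n) :
    rho (consP s w ν) = wmon w * rho ν := by
  rw [rho, Fin.prod_univ_succ]
  have h1 : Polynomial.C (Polynomial.X ^ ((consP s w ν).wt 0).2)
      * Polynomial.X ^ ((consP s w ν).wt 0).1 = wmon w := by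
    rw [wt_consP_zero, wmon]
  have h2 : ∀ i : Fin n, (Polynomial.C (Polynomial.X ^ ((consP s w ν).wt i.succ).2)
      * Polynomial.X ^ ((consP s w ν).wt i.succ).1 : Polynomial (Polynomial ℤ))
      = (Polynomial.C (Polynomial.X ^ (ν.wt i).2) * Polynomial.X ^ (ν.wt i).1
        : Polynomial (Polynomial ℤ)) :=
    fun i => by rw [wt_consP_succ]
  rw [h1, Finset.prod_congr rfl fun i _ => h2 i, ← rho]

lemma rho_TS : ∀ (n H : ℕ), ∑ μ ∈ TS n H, rho μ = Fv n H := by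
  intro n
  induction n with
  | zero =>
    intro H
    cases H with
    | zero => simp [TS, Fv, rho]
    | succ H => simp [TS, Fv]
  | succ n ih =>
    intro H
    rw [show TS (n+1) H = Finset.univ.biUnion fun s : MStep =>
        ((wset s H) ×ˢ TS n (nh s H)).image (fun p => consP s p.1 p.2) from rfl]
    rw [Finset.sum_biUnion]
    · rw [Fv]
      refine Finset.sum_congr rfl ?_
      intro s _
      rw [Finset.sum_image]
      · rw [Finset.sum_product, ← ih (nh s H), Finset.sum_mul]
        refine Finset.sum_congr rfl fun w _ => ?_
        rw [Finset.mul_sum]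
        exact Finset.sum_congr rfl fun ν _ => rho_consP s w ν
      · rintro ⟨w, ν⟩ - ⟨w', ν'⟩ - hc
        have h1 := congrArg WPath.step hc
        have h2 := congrArg WPath.wt hc
        simp only [consP] at h1 h2
        rw [Fin.cons_inj] at h1 h2
        have hν : ν = ν' := by
          cases ν; cases ν'
          simp only [WPath.mk.injEq]
          exact ⟨h1.2, h2.2⟩
        rw [Prod.ext_iff]
        exact ⟨h2.1, hν⟩
    · intro s1 _ s2 _ hne
      simp only [Function.onFun]
      rw [Finset.disjoint_left]
      intro μ hμ1 hμ2
      simp only [Finset.mem_image, Finset.mem_product] at hμ1 hμ2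
      obtain ⟨⟨w, ν⟩, -, rfl⟩ := hμ1
      obtain ⟨⟨w', ν'⟩, -, hc⟩ := hμ2
      have := congrArg (fun μ : WPath (n+1) => μ.step 0) hc
      exact hne (by simpa [consP] using this.symm)

lemma Tscond_iff {n : ℕ} (μ : WPath n) : Tscond μ ↔ TgenP 0 μ := by
  unfold Tscond IsMotzkin TgenP
  simp only [Nat.cast_zero, zero_add]
  constructor
  · rintro ⟨⟨h1, h2⟩, h3⟩
    refine ⟨h1, h2, fun j => ?_⟩
    obtain ⟨c1, c2, c3, c4⟩ := h3 j
    cases hs : μ.step j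
    · exact c1 hs
    · exact c4 hs
    · exact c2 hs
    · exact c3 hs
  · rintro ⟨h1, h2, h3⟩
    refine ⟨⟨h1, h2⟩, fun j => ?_⟩
    have hj := h3 j
    refine ⟨?_, ?_, ?_, ?_⟩ <;> intro hs <;> rw [hs] at hj <;> exact hj

end PartA

end Aux

/-- Proposition 2.3: for `n ≥ 0`, `ρ(T*_n) = Q_n(t,q)` in `ℤ[t,q]`. -/
theorem statement11 (n : ℕ) :
    (∑ᶠ μ ∈ {μ : WPath n | Tscond μ}, rho μ) = Qpoly n := by
  have hset : {μ : WPath n | Tscond μ} = ↑(TS n 0) := by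
    ext μ
    simp only [Set.mem_setOf_eq, Finset.mem_coe]
    rw [mem_TS, Tscond_iff]
  rw [hset, finsum_mem_coe_finset, rho_TS, FvQ]
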